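/- Let N, d ≥ 1, let ν_I : (ZMod N)^I → ℝ for I ⊊ {1,…,d} be arbitrary weights, and let D be the associated dual-function operator. Let Ω ⊆ (ZMod N)^d have face structure. If g : (ZMod N)^d → ℝ vanishes outside Ω, then Dg vanishes outside Ω. -/
import Mathlib


noncomputable section
open Finset

/-- `P_ω(x,y)`: the point whose `i`-th coordinate is `x i` if `ω i = false` and `y i` otherwise. -/
def proj {ι : Type*} {N : ℕ} (ω : ι → Bool) (x y : ι → ZMod N) : ι → ZMod N :=
  fun i => if ω i then y i else x i

/-- `P_{ω_I}(x_I, y_I)` as a function on the subtype `↥I`. -/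
def projI {ι : Type*} {N : ℕ} {I : Finset ι} (ω : I → Bool) (x y : ι → ZMod N) :
    I → ZMod N :=
  fun i => if ω i then y i.1 else x i.1

/-- The dual function `Df`. -/
def dualFn {ι : Type*} [Fintype ι] [DecidableEq ι] {N : ℕ} [NeZero N]
    (ν : (I : Finset ι) → (I → ZMod N) → ℝ) (f : (ι → ZMod N) → ℝ)
    (x : ι → ZMod N) : ℝ :=
  Finset.expect Finset.univ fun y : ι → ZMod N =>
    (∏ ω ∈ univ.filter (fun ω : ι → Bool => ω ≠ fun _ => false), f (proj ω x y)) *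
      ∏ I ∈ univ.filter (fun I : Finset ι => I ≠ univ),
        ∏ ω ∈ univ.filter (fun ω : I → Bool => ω ≠ fun _ => false), ν I (projI ω x y)

/-- A set `Ω` has face structure if it is the intersection of sets `Ω_J` over `∅ ≠ J ⊊ ι`,
where membership in `Ω_J` depends only on the coordinates outside of `J`. -/
def HasFaceStructure {ι : Type*} [Fintype ι] [DecidableEq ι] {N : ℕ}
    (Ω : Set (ι → ZMod N)) : Prop :=
  ∃ ΩJ : Finset ι → Set (ι → ZMod N),
    (∀ J : Finset ι, J ≠ ∅ → J ≠ univ →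
      ∀ x y : ι → ZMod N, (∀ i, i ∉ J → x i = y i) → (x ∈ ΩJ J → y ∈ ΩJ J)) ∧
    Ω = ⋂ J ∈ {J : Finset ι | J ≠ ∅ ∧ J ≠ univ}, ΩJ J

/-- If `g` vanishes outside a set `Ω` with face structure, then so does its dual function. -/
theorem dualFn_vanishes_outside (N d : ℕ) [NeZero N] (hd : 1 ≤ d)
    (ν : (I : Finset (Fin d)) → (I → ZMod N) → ℝ)
    (Ω : Set (Fin d → ZMod N)) (hΩ : HasFaceStructure Ω)
    (g : (Fin d → ZMod N) → ℝ) (hg : ∀ x, x ∉ Ω → g x = 0) :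
    ∀ x, x ∉ Ω → dualFn ν g x = 0 := by
  intro x hx
  obtain ⟨ΩJ, hdep, hΩeq⟩ := hΩ
  rw [hΩeq] at hx
  simp only [Set.mem_iInter, not_forall] at hx
  obtain ⟨J, ⟨hJ0, hJu⟩, hxJ⟩ := hx
  obtain ⟨i0, hi0⟩ := Finset.nonempty_iff_ne_empty.2 hJ0
  apply Finset.expect_eq_zero
  intro y _
  set ω : Fin d → Bool := fun i => decide (i ∈ J) with hω
  have hωmem : ω ∈ univ.filter (fun ω : Fin d → Bool => ω ≠ fun _ => false) := by
    simp only [mem_filter, mem_univ, true_and]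
    intro h
    have := congrFun h i0
    simp [hω, hi0] at this
  have hz : g (proj ω x y) = 0 := by
    apply hg
    rw [hΩeq]
    simp only [Set.mem_iInter, not_forall]
    refine ⟨J, ⟨hJ0, hJu⟩, fun hmem => hxJ ?_⟩
    apply hdep J hJ0 hJu (proj ω x y) x _ hmem
    intro i hi
    simp [proj, hω, hi]
  rw [Finset.prod_eq_zero hωmem hz, zero_mul]

end
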